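/- (Self-duality of the resolvent of d-dimensional geometric Brownian motion, Proposition 2.1.) Let r > 0 and for a nonnegative measurable function g on (0,∞)^d define G_r g(x) := ∫₀^∞ ∫_{(0,∞)^d} e^{−rt} q(t;x,y) g(y) dy dt. Then for all nonnegative measurable functions f, g on (0,∞)^d: ∫_{(0,∞)^d} f(x) · G_r g(x) · h(x) dx = ∫_{(0,∞)^d} g(x) · G_r f(x) · h(x) dx. -/

import Mathlib

open MeasureTheory Matrix Real BigOperators
open scoped ENNReal NNReal

set_option maxHeartbeats 1000000

/-- The lognormal transition density `q(t;x,y)` of a `d`-dimensional geometric Brownian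
motion with volatility vector `a`, drift vector `mbar` (in log-coordinates) and
correlation matrix `S`. -/
noncomputable def lognormalDensity {d : ℕ} (a mbar : Fin d → ℝ)
    (S : Matrix (Fin d) (Fin d) ℝ) (t : ℝ) (x y : Fin d → ℝ) : ℝ :=
  let z : Fin d → ℝ := fun i => (1 / a i) * Real.log (y i / x i)
  (2 * Real.pi * t) ^ (-(d : ℝ) / 2) * S.det ^ (-(1 : ℝ) / 2) * (∏ i, a i * y i)⁻¹ *
    Real.exp (-(1 / (2 * t)) * ((z - t • mbar) ⬝ᵥ S⁻¹.mulVec (z - t • mbar)))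

/-- The density `h(y)` of the duality measure `m(dy) = h(y) dy`. -/
noncomputable def weight {d : ℕ} (a mbar : Fin d → ℝ)
    (S : Matrix (Fin d) (Fin d) ℝ) (y : Fin d → ℝ) : ℝ :=
  (∏ i, (y i)⁻¹) *
    Real.exp (2 * (mbar ⬝ᵥ S⁻¹.mulVec fun i => (1 / a i) * Real.log (y i)))

/-- The resolvent `G_r g(x) = ∫₀^∞ ∫_{(0,∞)^d} e^{-rt} q(t;x,y) g(y) dy dt`. -/
noncomputable def gbmResolvent {d : ℕ} (a mbar : Fin d → ℝ)
    (S : Matrix (Fin d) (Fin d) ℝ) (r : ℝ) (g : (Fin d → ℝ) → ℝ≥0∞)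
    (x : Fin d → ℝ) : ℝ≥0∞ :=
  ∫⁻ t in Set.Ioi (0 : ℝ), ∫⁻ y in Set.univ.pi fun _ : Fin d => Set.Ioi (0 : ℝ),
    ENNReal.ofReal (Real.exp (-r * t) * lognormalDensity a mbar S t x y) * g y

section AuxLemmas

variable {d : ℕ}

lemma dot_inv_symm (S : Matrix (Fin d) (Fin d) ℝ) (hS : S.PosDef) (u v : Fin d → ℝ) :
    u ⬝ᵥ S⁻¹.mulVec v = v ⬝ᵥ S⁻¹.mulVec u := by
  have h : S⁻¹ᵀ = S⁻¹ := by
    rw [Matrix.transpose_nonsing_inv]; congr 1; exact hS.isHermitian.eq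
  rw [Matrix.dotProduct_mulVec, ← h, Matrix.vecMul_transpose, dotProduct_comm, h]

/-- The fundamental pointwise duality identity: `q(t;x,y) h(x) = q(t;y,x) h(y)`. -/
lemma key_ident (a mbar : Fin d → ℝ)
    (S : Matrix (Fin d) (Fin d) ℝ) (hS : S.PosDef) {t : ℝ} (ht : 0 < t)
    {x y : Fin d → ℝ} (hx : ∀ i, 0 < x i) (hy : ∀ i, 0 < y i) :
    lognormalDensity a mbar S t x y * weight a mbar S x
      = lognormalDensity a mbar S t y x * weight a mbar S y := by
  set Lx : Fin d → ℝ := fun i => (1 / a i) * Real.log (x i) with hLx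
  set Ly : Fin d → ℝ := fun i => (1 / a i) * Real.log (y i) with hLy
  have hz1 : (fun i => (1 / a i) * Real.log (y i / x i)) = Ly - Lx := by
    funext i
    simp only [Pi.sub_apply, hLx, hLy]
    rw [Real.log_div (ne_of_gt (hy i)) (ne_of_gt (hx i))]
    ring
  have hz2 : (fun i => (1 / a i) * Real.log (x i / y i)) = Lx - Ly := by
    funext i
    simp only [Pi.sub_apply, hLx, hLy]
    rw [Real.log_div (ne_of_gt (hx i)) (ne_of_gt (hy i))]
    ring
  have hexpand : ∀ u : Fin d → ℝ,
      ((u - t • mbar) ⬝ᵥ S⁻¹.mulVec (u - t • mbar))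
        = u ⬝ᵥ S⁻¹.mulVec u - 2 * t * (mbar ⬝ᵥ S⁻¹.mulVec u)
          + t ^ 2 * (mbar ⬝ᵥ S⁻¹.mulVec mbar) := by
    intro u
    have hs := dot_inv_symm S hS u mbar
    simp only [sub_dotProduct, dotProduct_sub, Matrix.mulVec_sub,
      Matrix.mulVec_smul, dotProduct_smul, smul_dotProduct, smul_eq_mul]
    rw [hs]
    ring
  have hmsub : mbar ⬝ᵥ S⁻¹.mulVec (Ly - Lx)
      = mbar ⬝ᵥ S⁻¹.mulVec Ly - mbar ⬝ᵥ S⁻¹.mulVec Lx := by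
    simp [Matrix.mulVec_sub, dotProduct_sub]
  have e2 : ((Lx - Ly - t • mbar) ⬝ᵥ S⁻¹.mulVec (Lx - Ly - t • mbar))
      = (Ly - Lx) ⬝ᵥ S⁻¹.mulVec (Ly - Lx) + 2 * t * (mbar ⬝ᵥ S⁻¹.mulVec (Ly - Lx))
        + t ^ 2 * (mbar ⬝ᵥ S⁻¹.mulVec mbar) := by
    rw [hexpand (Lx - Ly)]
    have h1 : (Lx - Ly) = -(Ly - Lx) := by ring
    have h2 : (Lx - Ly) ⬝ᵥ S⁻¹.mulVec (Lx - Ly) = (Ly - Lx) ⬝ᵥ S⁻¹.mulVec (Ly - Lx) := by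
      rw [h1, Matrix.mulVec_neg, dotProduct_neg, neg_dotProduct, neg_neg]
    have h3 : mbar ⬝ᵥ S⁻¹.mulVec (Lx - Ly) = -(mbar ⬝ᵥ S⁻¹.mulVec (Ly - Lx)) := by
      rw [h1, Matrix.mulVec_neg, dotProduct_neg]
    rw [h2, h3]
    ring
  have hprod : (∏ i, a i * y i)⁻¹ * (∏ i, (x i)⁻¹)
      = (∏ i, a i * x i)⁻¹ * (∏ i, (y i)⁻¹) := by
    simp only [Finset.prod_mul_distrib, mul_inv, ← Finset.prod_inv_distrib]
    ring
  unfold lognormalDensity weight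
  simp only [hz1, hz2, ← hLx, ← hLy]
  rw [hexpand (Ly - Lx), e2]
  set K := (2 * Real.pi * t) ^ (-(d : ℝ) / 2) * S.det ^ (-(1 : ℝ) / 2) with hK
  set Q := (Ly - Lx) ⬝ᵥ S⁻¹.mulVec (Ly - Lx) with hQ
  set R := mbar ⬝ᵥ S⁻¹.mulVec (Ly - Lx) with hR
  set M := mbar ⬝ᵥ S⁻¹.mulVec mbar with hM
  set Wx := mbar ⬝ᵥ S⁻¹.mulVec Lx with hWx
  set Wy := mbar ⬝ᵥ S⁻¹.mulVec Ly with hWy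
  have key3 : Real.exp (-(1 / (2 * t)) * (Q - 2 * t * R + t ^ 2 * M)) * Real.exp (2 * Wx)
      = Real.exp (-(1 / (2 * t)) * (Q + 2 * t * R + t ^ 2 * M)) * Real.exp (2 * Wy) := by
    rw [← Real.exp_add, ← Real.exp_add]
    congr 1
    rw [hmsub]
    field_simp
    ring
  set A1 := (∏ i, a i * y i)⁻¹ with hA1
  set A2 := (∏ i, a i * x i)⁻¹ with hA2
  set B1 := (∏ i, (x i)⁻¹) with hB1
  set B2 := (∏ i, (y i)⁻¹) with hB2
  set E1 := Real.exp (-(1 / (2 * t)) * (Q - 2 * t * R + t ^ 2 * M)) with hE1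
  set E2 := Real.exp (-(1 / (2 * t)) * (Q + 2 * t * R + t ^ 2 * M)) with hE2
  set F1 := Real.exp (2 * Wx) with hF1
  set F2 := Real.exp (2 * Wy) with hF2
  linear_combination K * E1 * F1 * hprod + K * A2 * B2 * key3

lemma measurable_lognormal (a mbar : Fin d → ℝ) (S : Matrix (Fin d) (Fin d) ℝ) :
    Measurable fun p : ℝ × (Fin d → ℝ) × (Fin d → ℝ) =>
      lognormalDensity a mbar S p.1 p.2.1 p.2.2 := by
  unfold lognormalDensity
  simp only [dotProduct, Matrix.mulVec, Pi.sub_apply, Pi.smul_apply, smul_eq_mul]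
  have h1 : Measurable fun p : ℝ × (Fin d → ℝ) × (Fin d → ℝ) =>
      (2 * Real.pi * p.1) ^ (-(d : ℝ) / 2) := by fun_prop
  have h2 : Measurable fun p : ℝ × (Fin d → ℝ) × (Fin d → ℝ) =>
      (∏ i, a i * p.2.2 i)⁻¹ := by
    apply Measurable.inv
    apply Finset.measurable_prod
    intro i _
    exact measurable_const.mul ((measurable_pi_apply i).comp (measurable_snd.comp measurable_snd))
  have hzi : ∀ i : Fin d, Measurable fun p : ℝ × (Fin d → ℝ) × (Fin d → ℝ) =>
      1 / a i * Real.log (p.2.2 i / p.2.1 i) - p.1 * mbar i := by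
    intro i
    apply Measurable.sub
    · exact (Real.measurable_log.comp
        (((measurable_pi_apply i).comp (measurable_snd.comp measurable_snd)).div
          ((measurable_pi_apply i).comp (measurable_fst.comp measurable_snd)))).const_mul _
    · exact measurable_fst.mul measurable_const
  have h3 : Measurable fun p : ℝ × (Fin d → ℝ) × (Fin d → ℝ) =>
      Real.exp (-(1 / (2 * p.1)) *
        ∑ i, (1 / a i * Real.log (p.2.2 i / p.2.1 i) - p.1 * mbar i) *
          ∑ j, S⁻¹ i j * (1 / a j * Real.log (p.2.2 j / p.2.1 j) - p.1 * mbar j)) := by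
    apply Real.measurable_exp.comp
    apply Measurable.mul
    · exact (measurable_const.div (measurable_fst.const_mul 2)).neg
    · apply Finset.measurable_sum
      intro i _
      exact (hzi i).mul (Finset.measurable_sum _ fun j _ => (hzi j).const_mul _)
  exact ((h1.mul measurable_const).mul h2).mul h3

lemma measurable_weight (a mbar : Fin d → ℝ) (S : Matrix (Fin d) (Fin d) ℝ) :
    Measurable (weight a mbar S) := by
  unfold weight
  simp only [dotProduct, Matrix.mulVec]
  apply Measurable.mul
  · exact Finset.measurable_prod _ fun i _ => (measurable_pi_apply i).inv
  · apply Real.measurable_exp.comp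
    apply Measurable.const_mul
    apply Finset.measurable_sum
    intro i _
    apply Measurable.const_mul
    apply Finset.measurable_sum
    intro j _
    exact ((Real.measurable_log.comp (measurable_pi_apply j)).const_mul _).const_mul _

lemma lognormal_nonneg (a mbar : Fin d → ℝ) (ha : ∀ i, 0 < a i)
    (S : Matrix (Fin d) (Fin d) ℝ) (hS : S.PosDef) {t : ℝ} (ht : 0 < t)
    (x : Fin d → ℝ) {y : Fin d → ℝ} (hy : ∀ i, 0 < y i) :
    0 ≤ lognormalDensity a mbar S t x y := by
  unfold lognormalDensity
  have h1 : (0:ℝ) ≤ (2 * Real.pi * t) ^ (-(d : ℝ) / 2) := by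
    apply Real.rpow_nonneg
    positivity
  have h2 : (0:ℝ) ≤ S.det ^ (-(1:ℝ) / 2) := Real.rpow_nonneg hS.det_pos.le _
  have h3 : (0:ℝ) ≤ (∏ i, a i * y i)⁻¹ := by
    apply inv_nonneg.2
    exact Finset.prod_nonneg fun i _ => (mul_pos (ha i) (hy i)).le
  positivity

/-- The key identity in `ℝ≥0∞` form, with the discount factor. -/
lemma key_ennreal (a mbar : Fin d → ℝ) (ha : ∀ i, 0 < a i)
    (S : Matrix (Fin d) (Fin d) ℝ) (hS : S.PosDef) (r : ℝ) {t : ℝ} (ht : 0 < t)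
    {x y : Fin d → ℝ} (hx : ∀ i, 0 < x i) (hy : ∀ i, 0 < y i) :
    ENNReal.ofReal (Real.exp (-r * t) * lognormalDensity a mbar S t x y) *
        ENNReal.ofReal (weight a mbar S x)
      = ENNReal.ofReal (Real.exp (-r * t) * lognormalDensity a mbar S t y x) *
        ENNReal.ofReal (weight a mbar S y) := by
  rw [← ENNReal.ofReal_mul
      (mul_nonneg (Real.exp_pos _).le (lognormal_nonneg a mbar ha S hS ht x hy)),
    ← ENNReal.ofReal_mul
      (mul_nonneg (Real.exp_pos _).le (lognormal_nonneg a mbar ha S hS ht y hx))]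
  congr 1
  rw [mul_assoc, mul_assoc, key_ident a mbar S hS ht hx hy]

lemma main_reduction (a mbar : Fin d → ℝ)
    (S : Matrix (Fin d) (Fin d) ℝ) (r : ℝ)
    (f g : (Fin d → ℝ) → ℝ≥0∞) (hf : Measurable f) (hg : Measurable g) :
    (∫⁻ x in Set.univ.pi fun _ : Fin d => Set.Ioi (0 : ℝ),
        f x * gbmResolvent a mbar S r g x * ENNReal.ofReal (weight a mbar S x))
      = ∫⁻ t in Set.Ioi (0 : ℝ),
          ∫⁻ x in Set.univ.pi fun _ : Fin d => Set.Ioi (0 : ℝ),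
          ∫⁻ y in Set.univ.pi fun _ : Fin d => Set.Ioi (0 : ℝ),
          ENNReal.ofReal (Real.exp (-r * t) * lognormalDensity a mbar S t x y) *
            ENNReal.ofReal (weight a mbar S x) * (f x * g y) := by
  have hΦ : Measurable fun p : ℝ × (Fin d → ℝ) × (Fin d → ℝ) =>
      ENNReal.ofReal (Real.exp (-r * p.1) * lognormalDensity a mbar S p.1 p.2.1 p.2.2) :=
    ((Real.measurable_exp.comp (measurable_fst.const_mul (-r))).mul
      (measurable_lognormal a mbar S)).ennreal_ofReal
  have hH : Measurable fun x : Fin d → ℝ => ENNReal.ofReal (weight a mbar S x) :=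
    (measurable_weight a mbar S).ennreal_ofReal
  have step1 : ∀ x : Fin d → ℝ,
      f x * gbmResolvent a mbar S r g x * ENNReal.ofReal (weight a mbar S x)
        = ∫⁻ t in Set.Ioi (0 : ℝ), ∫⁻ y in Set.univ.pi fun _ : Fin d => Set.Ioi (0 : ℝ),
            ENNReal.ofReal (Real.exp (-r * t) * lognormalDensity a mbar S t x y) *
              ENNReal.ofReal (weight a mbar S x) * (f x * g y) := by
    intro x
    have hp1 : Measurable fun q : ℝ × (Fin d → ℝ) => (q.1, (x, q.2)) :=
      measurable_fst.prodMk (measurable_const.prodMk measurable_snd)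
    have hmeas_ty : Measurable fun q : ℝ × (Fin d → ℝ) =>
        ENNReal.ofReal (Real.exp (-r * q.1) * lognormalDensity a mbar S q.1 x q.2) * g q.2 :=
      (hΦ.comp hp1).mul (hg.comp measurable_snd)
    have meas_t : Measurable fun t : ℝ =>
        ∫⁻ y in Set.univ.pi fun _ : Fin d => Set.Ioi (0 : ℝ),
        ENNReal.ofReal (Real.exp (-r * t) * lognormalDensity a mbar S t x y) * g y :=
      hmeas_ty.lintegral_prod_right'
    have e1 : f x * gbmResolvent a mbar S r g x * ENNReal.ofReal (weight a mbar S x)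
        = gbmResolvent a mbar S r g x * (ENNReal.ofReal (weight a mbar S x) * f x) := by
      ring
    rw [e1]
    unfold gbmResolvent
    rw [← lintegral_mul_const _ meas_t]
    refine lintegral_congr fun t => ?_
    have hp2 : Measurable fun y : Fin d → ℝ => (t, (x, y)) :=
      measurable_const.prodMk (measurable_const.prodMk measurable_id)
    have meas_y : Measurable fun y : Fin d → ℝ =>
        ENNReal.ofReal (Real.exp (-r * t) * lognormalDensity a mbar S t x y) * g y :=
      (hΦ.comp hp2).mul hg
    rw [← lintegral_mul_const _ meas_y]
    exact lintegral_congr fun y => by ring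
  calc (∫⁻ x in Set.univ.pi fun _ : Fin d => Set.Ioi (0 : ℝ),
        f x * gbmResolvent a mbar S r g x * ENNReal.ofReal (weight a mbar S x))
      = ∫⁻ x in Set.univ.pi fun _ : Fin d => Set.Ioi (0 : ℝ),
          ∫⁻ t in Set.Ioi (0 : ℝ), ∫⁻ y in Set.univ.pi fun _ : Fin d => Set.Ioi (0 : ℝ),
          ENNReal.ofReal (Real.exp (-r * t) * lognormalDensity a mbar S t x y) *
            ENNReal.ofReal (weight a mbar S x) * (f x * g y) :=
        lintegral_congr fun x => step1 x
    _ = ∫⁻ t in Set.Ioi (0 : ℝ), ∫⁻ x in Set.univ.pi fun _ : Fin d => Set.Ioi (0 : ℝ),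
          ∫⁻ y in Set.univ.pi fun _ : Fin d => Set.Ioi (0 : ℝ),
          ENNReal.ofReal (Real.exp (-r * t) * lognormalDensity a mbar S t x y) *
            ENNReal.ofReal (weight a mbar S x) * (f x * g y) := by
        have hproj : Measurable fun q : ((Fin d → ℝ) × ℝ) × (Fin d → ℝ) =>
            (q.1.2, (q.1.1, q.2)) :=
          (measurable_snd.comp measurable_fst).prodMk
            ((measurable_fst.comp measurable_fst).prodMk measurable_snd)
        have hmeas : Measurable (fun q : ((Fin d → ℝ) × ℝ) × (Fin d → ℝ) =>
            ENNReal.ofReal (Real.exp (-r * q.1.2) * lognormalDensity a mbar S q.1.2 q.1.1 q.2) *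
              ENNReal.ofReal (weight a mbar S q.1.1) * (f q.1.1 * g q.2)) :=
          ((hΦ.comp hproj).mul (hH.comp (measurable_fst.comp measurable_fst))).mul
            ((hf.comp (measurable_fst.comp measurable_fst)).mul (hg.comp measurable_snd))
        exact lintegral_lintegral_swap hmeas.lintegral_prod_right'.aemeasurable

end AuxLemmas

/-- Self-duality of the resolvent of `d`-dimensional geometric Brownian motion with
respect to the measure `m(dx) = h(x) dx`:
`∫ f(x) G_r g(x) h(x) dx = ∫ g(x) G_r f(x) h(x) dx` for all nonnegative measurable
`f, g`. -/
theorem resolvent_self_dual {d : ℕ} (hd : 1 ≤ d) (a μ : Fin d → ℝ) (ha : ∀ i, 0 < a i)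
    (S : Matrix (Fin d) (Fin d) ℝ) (hS : S.PosDef) (hdiag : ∀ i, S i i = 1)
    (r : ℝ) (hr : 0 < r)
    (f g : (Fin d → ℝ) → ℝ≥0∞) (hf : Measurable f) (hg : Measurable g) :
    (∫⁻ x in Set.univ.pi fun _ : Fin d => Set.Ioi (0 : ℝ),
        f x * gbmResolvent a (fun i => (μ i - (a i) ^ 2 / 2) / a i) S r g x *
          ENNReal.ofReal (weight a (fun i => (μ i - (a i) ^ 2 / 2) / a i) S x))
      = ∫⁻ x in Set.univ.pi fun _ : Fin d => Set.Ioi (0 : ℝ),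
        g x * gbmResolvent a (fun i => (μ i - (a i) ^ 2 / 2) / a i) S r f x *
          ENNReal.ofReal (weight a (fun i => (μ i - (a i) ^ 2 / 2) / a i) S x) := by
  set mbar : Fin d → ℝ := fun i => (μ i - (a i) ^ 2 / 2) / a i with hmbar
  rw [main_reduction a mbar S r f g hf hg, main_reduction a mbar S r g f hg hf]
  have hΦ : Measurable fun p : ℝ × (Fin d → ℝ) × (Fin d → ℝ) =>
      ENNReal.ofReal (Real.exp (-r * p.1) * lognormalDensity a mbar S p.1 p.2.1 p.2.2) :=
    ((Real.measurable_exp.comp (measurable_fst.const_mul (-r))).mul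
      (measurable_lognormal a mbar S)).ennreal_ofReal
  have hH : Measurable fun x : Fin d → ℝ => ENNReal.ofReal (weight a mbar S x) :=
    (measurable_weight a mbar S).ennreal_ofReal
  have hPmeas : MeasurableSet (Set.univ.pi fun _ : Fin d => Set.Ioi (0 : ℝ)) :=
    MeasurableSet.univ_pi fun _ => measurableSet_Ioi
  refine lintegral_congr_ae ?_
  filter_upwards [self_mem_ae_restrict (measurableSet_Ioi : MeasurableSet (Set.Ioi (0:ℝ)))]
    with t ht
  have ht' : (0:ℝ) < t := ht
  calc (∫⁻ x in Set.univ.pi fun _ : Fin d => Set.Ioi (0 : ℝ),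
          ∫⁻ y in Set.univ.pi fun _ : Fin d => Set.Ioi (0 : ℝ),
          ENNReal.ofReal (Real.exp (-r * t) * lognormalDensity a mbar S t x y) *
            ENNReal.ofReal (weight a mbar S x) * (f x * g y))
      = ∫⁻ x in Set.univ.pi fun _ : Fin d => Set.Ioi (0 : ℝ),
          ∫⁻ y in Set.univ.pi fun _ : Fin d => Set.Ioi (0 : ℝ),
          ENNReal.ofReal (Real.exp (-r * t) * lognormalDensity a mbar S t y x) *
            ENNReal.ofReal (weight a mbar S y) * (f x * g y) := by
        refine setLIntegral_congr_fun hPmeas (fun x hx => ?_)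
        refine setLIntegral_congr_fun hPmeas (fun y hy => ?_)
        have hx' : ∀ i, 0 < x i := fun i => hx i (Set.mem_univ i)
        have hy' : ∀ i, 0 < y i := fun i => hy i (Set.mem_univ i)
        rw [key_ennreal a mbar ha S hS r ht' hx' hy']
    _ = ∫⁻ y in Set.univ.pi fun _ : Fin d => Set.Ioi (0 : ℝ),
          ∫⁻ x in Set.univ.pi fun _ : Fin d => Set.Ioi (0 : ℝ),
          ENNReal.ofReal (Real.exp (-r * t) * lognormalDensity a mbar S t y x) *
            ENNReal.ofReal (weight a mbar S y) * (f x * g y) := by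
        have hproj : Measurable fun q : (Fin d → ℝ) × (Fin d → ℝ) =>
            ((t : ℝ), (q.2, q.1)) :=
          measurable_const.prodMk (measurable_snd.prodMk measurable_fst)
        have hmeas : Measurable (fun q : (Fin d → ℝ) × (Fin d → ℝ) =>
            ENNReal.ofReal (Real.exp (-r * t) * lognormalDensity a mbar S t q.2 q.1) *
              ENNReal.ofReal (weight a mbar S q.2) * (f q.1 * g q.2)) :=
          ((hΦ.comp hproj).mul (hH.comp measurable_snd)).mul
            ((hf.comp measurable_fst).mul (hg.comp measurable_snd))
        exact lintegral_lintegral_swap hmeas.aemeasurable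
    _ = ∫⁻ x in Set.univ.pi fun _ : Fin d => Set.Ioi (0 : ℝ),
          ∫⁻ y in Set.univ.pi fun _ : Fin d => Set.Ioi (0 : ℝ),
          ENNReal.ofReal (Real.exp (-r * t) * lognormalDensity a mbar S t x y) *
            ENNReal.ofReal (weight a mbar S x) * (g x * f y) :=
        lintegral_congr fun x => lintegral_congr fun y => by ring
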